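/- Let K be a commutative ring, p ≥ 2, and let M(t) be the lower-triangular matrices of the previous statement acting on V = K^{p−1} with standard basis e_1, …, e_{p−1} (where e_r plays the role of the weight vector e_{2r}). Define γ : K → V by γ(t) = Σ_{r=1}^{p−1} C(p−1, r) t^r e_r. Then γ satisfies the 1-cocycle identity γ(t₁ + t₂) = γ(t₁) + M(t₁) · γ(t₂) for all t₁, t₂ ∈ K. -/

import Mathlib

lemma cocycle_aux {K : Type*} [CommRing K] (n m : ℕ) (hm : m < n) (t₁ t₂ : K) :
    (n.choose (m + 1) : K) * (t₁ + t₂) ^ (m + 1) =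
      (n.choose (m + 1) : K) * t₁ ^ (m + 1) +
        ∑ r ∈ Finset.range n,
          (if r ≤ m then ((n - (r + 1)).choose (m - r) : K) * t₁ ^ (m - r) else 0) *
            ((n.choose (r + 1) : K) * t₂ ^ (r + 1)) := by
  have hsum : ∑ r ∈ Finset.range n,
      (if r ≤ m then ((n - (r + 1)).choose (m - r) : K) * t₁ ^ (m - r) else 0) *
        ((n.choose (r + 1) : K) * t₂ ^ (r + 1)) =
      ∑ r ∈ Finset.range (m + 1),
        ((n - (r + 1)).choose (m - r) : K) * t₁ ^ (m - r) *
          ((n.choose (r + 1) : K) * t₂ ^ (r + 1)) := by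
    rw [← Finset.sum_subset (Finset.range_subset_range.2 hm)]
    · apply Finset.sum_congr rfl
      intro r hr
      rw [if_pos (Nat.lt_succ_iff.1 (Finset.mem_range.1 hr))]
    · intro r _ hr
      rw [if_neg (by simpa [Nat.lt_succ_iff] using hr), zero_mul]
  rw [hsum, add_comm t₁ t₂, add_pow, Finset.sum_range_succ', mul_add]
  simp only [pow_zero, one_mul, Nat.choose_zero_right, Nat.cast_one, mul_one,
    Nat.add_sub_cancel]
  rw [add_comm]
  congr 1
  rw [Finset.mul_sum]
  apply Finset.sum_congr rfl
  intro r hr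
  have hrm : r + 1 ≤ m + 1 := Nat.succ_le_succ (Nat.lt_succ_iff.1 (Finset.mem_range.1 hr))
  have hkey : n.choose (m + 1) * (m + 1).choose (r + 1)
      = n.choose (r + 1) * (n - (r + 1)).choose (m - r) := by
    have := Nat.choose_mul (k := m + 1) (n := n) (s := r + 1) hrm
    simpa [Nat.succ_sub_succ] using this
  have : m + 1 - (r + 1) = m - r := by omega
  have hkeyK : ((n.choose (m + 1) : K)) * ((m + 1).choose (r + 1) : K)
      = (n.choose (r + 1) : K) * ((n - (r + 1)).choose (m - r) : K) := by
    exact_mod_cast congrArg (Nat.cast : ℕ → K) hkey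
  rw [this]
  linear_combination (t₂ ^ (r + 1) * t₁ ^ (m - r)) * hkeyK

theorem explicit_cocycle_identity (K : Type*) [CommRing K] (p : ℕ) (hp : 2 ≤ p)
    (M : K → Matrix (Fin (p - 1)) (Fin (p - 1)) K)
    (hM : ∀ (t : K) (m r : Fin (p - 1)),
      M t m r = if (r : ℕ) ≤ (m : ℕ) then
        ((p - 1 - ((r : ℕ) + 1)).choose ((m : ℕ) - (r : ℕ)) : K) * t ^ ((m : ℕ) - (r : ℕ))
      else 0)
    (γ : K → (Fin (p - 1) → K))
    (hγ : ∀ (t : K) (r : Fin (p - 1)),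
      γ t r = ((p - 1).choose ((r : ℕ) + 1) : K) * t ^ ((r : ℕ) + 1)) :
    ∀ t₁ t₂ : K, γ (t₁ + t₂) = γ t₁ + (M t₁).mulVec (γ t₂) := by
  intro t₁ t₂
  funext m
  simp only [Pi.add_apply, Matrix.mulVec, dotProduct, hγ, hM]
  have := cocycle_aux (K := K) (p - 1) (m : ℕ) m.isLt t₁ t₂
  rw [this]
  congr 1
  rw [Fin.sum_univ_eq_sum_range (fun r =>
    (if r ≤ (m : ℕ) then ((p - 1 - (r + 1)).choose ((m : ℕ) - r) : K) * t₁ ^ ((m : ℕ) - r) else 0) *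
      (((p - 1).choose (r + 1) : K) * t₂ ^ (r + 1)))]
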